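/- Let φ : ℝⁿ → ℝ be differentiable and strictly convex along coordinates, and let F : ℝⁿ → ℝ be differentiable and relative smooth along coordinates with respect to φ with constants Lᵢ > 0. Fix x ∈ ℝⁿ and a block i, and let d* ∈ ℝ^{nᵢ} be a minimizer of d ↦ ⟨Uᵢᵀ∇F(x), d⟩ + Lᵢ D_φ(x + Uᵢd, x). Then F(x + Uᵢd*) ≤ F(x) − Lᵢ D_φ(x, x + Uᵢd*), where D_φ(x, x + Uᵢd*) = φ(x) − φ(x + Uᵢd*) + ⟨Uᵢᵀ∇φ(x + Uᵢd*), d*⟩. -/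

import Mathlib

noncomputable section
open scoped RealInnerProductSpace

/-- `blockProj b i x` models `Uᵢ Uᵢᵀ x`: the vector of `ℝⁿ` keeping the coordinates of block
`i` (as given by the block assignment `b : Fin n → Fin N`) and zeroing the others.
A vector `d` of the block subspace (i.e. `Uᵢ d`) is modeled as a vector with
`blockProj b i d = d`; then `⟨Uᵢᵀ y, d⟩ = ⟪y, d⟫`. -/
def blockProj {n N : ℕ} (b : Fin n → Fin N) (i : Fin N) (x : EuclideanSpace ℝ (Fin n)) :
    EuclideanSpace ℝ (Fin n) :=
  (EuclideanSpace.equiv (Fin n) ℝ).symm (fun j => if b j = i then x j else 0)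

/-- let `φ` be differentiable and strictly convex along coordinates, and
`F` differentiable and relative smooth along coordinates w.r.t. `φ` with constants
`Lᵢ > 0`.  If `d*` minimizes `d ↦ ⟨Uᵢᵀ∇F(x), d⟩ + Lᵢ D_φ(x + Uᵢd, x)` over the block-`i`
subspace, then `F(x + Uᵢd*) ≤ F(x) − Lᵢ D_φ(x, x + Uᵢd*)`, where
`D_φ(x, x + Uᵢd*) = φ(x) − φ(x + Uᵢd*) + ⟨Uᵢᵀ∇φ(x + Uᵢd*), d*⟩`. -/
theorem relative_smooth_coordinate_descent_step (n N : ℕ) (b : Fin n → Fin N)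
    (φ F : EuclideanSpace ℝ (Fin n) → ℝ)
    (hφdiff : Differentiable ℝ φ) (hFdiff : Differentiable ℝ F)
    (hφsc : ∀ (x : EuclideanSpace ℝ (Fin n)) (i : Fin N),
      StrictConvexOn ℝ {d : EuclideanSpace ℝ (Fin n) | blockProj b i d = d}
        (fun d => φ (x + d)))
    (L : Fin N → ℝ) (hL : ∀ i, 0 < L i)
    (hrel : ∀ (x d : EuclideanSpace ℝ (Fin n)) (i : Fin N), blockProj b i d = d →
      F (x + d) ≤ F x + ⟪gradient F x, d⟫
        + L i * (φ (x + d) - φ x - ⟪gradient φ x, d⟫))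
    (x : EuclideanSpace ℝ (Fin n)) (i : Fin N)
    (dstar : EuclideanSpace ℝ (Fin n)) (hdstar : blockProj b i dstar = dstar)
    (hmin : ∀ d : EuclideanSpace ℝ (Fin n), blockProj b i d = d →
      ⟪gradient F x, dstar⟫ + L i * (φ (x + dstar) - φ x - ⟪gradient φ x, dstar⟫)
        ≤ ⟪gradient F x, d⟫ + L i * (φ (x + d) - φ x - ⟪gradient φ x, d⟫)) :
    F (x + dstar) ≤ F x - L i * (φ x - φ (x + dstar) + ⟪gradient φ (x + dstar), dstar⟫) := by
  classical
  set l := L i with hl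
  -- abbreviations
  have hgrad : ∀ (f : EuclideanSpace ℝ (Fin n) → ℝ) (y v : EuclideanSpace ℝ (Fin n)),
      ⟪gradient f y, v⟫ = fderiv ℝ f y v := by
    intro f y v
    rw [gradient, InnerProductSpace.toDual_symm_apply]
  -- the scalar objective along the ray t • dstar
  set g : ℝ → ℝ := fun t => ⟪gradient F x, dstar⟫ * t
      + l * (φ (x + t • dstar) - φ x - t * ⟪gradient φ x, dstar⟫) with hg
  have hbp : ∀ (y : EuclideanSpace ℝ (Fin n)) (j : Fin n),
      blockProj b i y j = if b j = i then y j else 0 := fun y j => rfl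
  have hproj : ∀ t : ℝ, blockProj b i (t • dstar) = t • dstar := by
    intro t
    ext j
    have h0 : (if b j = i then dstar j else 0) = dstar j := by
      rw [← hbp]; exact congrFun (congrArg WithLp.ofLp hdstar) j
    rw [hbp]
    by_cases h : b j = i
    · simp [h]
    · simp only [h, if_false] at h0 ⊢
      simp [PiLp.smul_apply, ← h0]
  have hmin1 : ∀ t : ℝ, g 1 ≤ g t := by
    intro t
    have h := hmin (t • dstar) (hproj t)
    rw [real_inner_smul_right, real_inner_smul_right] at h
    simp only [hg, one_smul, mul_one, one_mul]
    linarith [h]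
  have hlocmin : IsLocalMin g 1 := Filter.Eventually.of_forall hmin1
  -- derivative of g at 1
  have h1 : HasDerivAt (fun t : ℝ => x + t • dstar) dstar 1 := by
    simpa using ((hasDerivAt_id (1:ℝ)).smul_const dstar).const_add x
  have h2 : HasDerivAt (fun t : ℝ => φ (x + t • dstar)) (fderiv ℝ φ (x + dstar) dstar) 1 := by
    have := ((hφdiff (x + (1:ℝ) • dstar)).hasFDerivAt.comp_hasDerivAt 1 h1)
    rw [one_smul] at this
    exact this
  have hgder : HasDerivAt g
      (⟪gradient F x, dstar⟫
        + l * (fderiv ℝ φ (x + dstar) dstar - ⟪gradient φ x, dstar⟫)) 1 := by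
    have ha : HasDerivAt (fun t : ℝ => ⟪gradient F x, dstar⟫ * t)
        ⟪gradient F x, dstar⟫ 1 := by
      simpa using (hasDerivAt_id (1:ℝ)).const_mul ⟪gradient F x, dstar⟫
    have hb : HasDerivAt (fun t : ℝ => φ (x + t • dstar) - φ x - t * ⟪gradient φ x, dstar⟫)
        (fderiv ℝ φ (x + dstar) dstar - ⟪gradient φ x, dstar⟫) 1 := by
      have hc : HasDerivAt (fun t : ℝ => t * ⟪gradient φ x, dstar⟫)
          ⟪gradient φ x, dstar⟫ 1 := by
        simpa using (hasDerivAt_id (1:ℝ)).mul_const ⟪gradient φ x, dstar⟫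
      exact (h2.sub_const (φ x)).sub hc
    exact ha.add (hb.const_mul l)
  have hkey : ⟪gradient F x, dstar⟫
      + l * (⟪gradient φ (x + dstar), dstar⟫ - ⟪gradient φ x, dstar⟫) = 0 := by
    have := hlocmin.hasDerivAt_eq_zero hgder
    rw [hgrad φ (x + dstar) dstar]
    exact this
  have hr := hrel x dstar i hdstar
  have : F x + ⟪gradient F x, dstar⟫ + l * (φ (x + dstar) - φ x - ⟪gradient φ x, dstar⟫)
      = F x - l * (φ x - φ (x + dstar) + ⟪gradient φ (x + dstar), dstar⟫) := by
    linear_combination hkey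
  linarith [hr, this.ge, this.le]
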